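/- Let 𝓗 be a connected hypergraph on H with 𝓗, X ⇝ H₁,…,Hₙ, let I ⊆ {1,…,n}, and for each i ∈ I let Tᵢ be a construct of 𝓗_{Hᵢ}. Then the tree X({Tᵢ : i ∈ I}), with root decorated by X and the constructs Tᵢ (i ∈ I) grafted onto it, is a construct of the reconnected restriction 𝓗↾(H ∖ ⋃_{j ∉ I} H_j). -/

import Mathlib

open scoped Classical

noncomputable section

/-! ## Hypergraphs (nestohedra combinatorics), after Curien–Laplante-Anfossi:
hypergraphs, restrictions, connectivity, saturation, reconnected restriction,
constructs/constructions, the face order, the flip rewriting, and terms over the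
associated signatures. -/

/-- A hypergraph on a finite vertex set: a finite set of nonempty hyperedges whose union is
the vertex set, assumed atomic (every singleton is a hyperedge). -/
structure CLHypergraph (α : Type*) [DecidableEq α] where
  verts : Finset α
  edges : Finset (Finset α)
  edges_nonempty : ∀ e ∈ edges, e.Nonempty
  edges_subset : ∀ e ∈ edges, e ⊆ verts
  atomic : ∀ v ∈ verts, {v} ∈ edges

namespace CLHypergraph

variable {α : Type*} [DecidableEq α]

/-- The plain restriction `𝓗_X` of a hypergraph to a subset `X` of its vertices. -/
def restrict (H : CLHypergraph α) (X : Finset α) : CLHypergraph α where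
  verts := X ∩ H.verts
  edges := H.edges.filter (· ⊆ X)
  edges_nonempty e he := H.edges_nonempty e (Finset.mem_filter.mp he).1
  edges_subset e he :=
    Finset.subset_inter (Finset.mem_filter.mp he).2 (H.edges_subset e (Finset.mem_filter.mp he).1)
  atomic v hv := by
    rcases Finset.mem_inter.mp hv with ⟨h1, h2⟩
    exact Finset.mem_filter.mpr ⟨H.atomic v h2, Finset.singleton_subset_iff.mpr h1⟩

/-- A hypergraph is connected if its vertex set is nonempty and admits no nontrivial
partition `X₁ ∪ X₂` such that every edge lies in `X₁` or in `X₂`. -/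
def Connected (H : CLHypergraph α) : Prop :=
  H.verts.Nonempty ∧ ∀ X₁ X₂ : Finset α, X₁.Nonempty → X₂.Nonempty →
    Disjoint X₁ X₂ → X₁ ∪ X₂ = H.verts → ∃ e ∈ H.edges, ¬e ⊆ X₁ ∧ ¬e ⊆ X₂

/-- `C` is (the vertex set of) a connected component of `H`: a maximal connected subset. -/
def IsComponent (H : CLHypergraph α) (C : Finset α) : Prop :=
  C ⊆ H.verts ∧ (H.restrict C).Connected ∧
    ∀ D : Finset α, C ⊆ D → D ⊆ H.verts → (H.restrict D).Connected → D = C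

/-- `y` and `z` lie in the same connected component of `H`. -/
def SameComponent (H : CLHypergraph α) (y z : α) : Prop :=
  ∃ C : Finset α, H.IsComponent C ∧ y ∈ C ∧ z ∈ C

/-- The saturation `Sat(𝓗)`: the set of (nonempty) connected subsets of vertices. -/
def sat (H : CLHypergraph α) : Finset (Finset α) :=
  H.verts.powerset.filter fun X => (H.restrict X).Connected

theorem singleton_connected (H : CLHypergraph α) {v : α} (hv : v ∈ H.verts) :
    (H.restrict {v}).Connected := by
  constructor
  · exact ⟨v, Finset.mem_inter.mpr ⟨Finset.mem_singleton_self v, hv⟩⟩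
  · intro X₁ X₂ h₁ h₂ hd hu
    exfalso
    have hv' : ({v} : Finset α) ∩ H.verts = {v} :=
      Finset.inter_eq_left.mpr (Finset.singleton_subset_iff.mpr hv)
    have hu' : X₁ ∪ X₂ = ({v} : Finset α) := hu.trans hv'
    have hX₁ : X₁ ⊆ {v} := hu' ▸ Finset.subset_union_left
    have hX₂ : X₂ ⊆ {v} := hu' ▸ Finset.subset_union_right
    obtain ⟨a, ha⟩ := h₁
    obtain ⟨b, hb⟩ := h₂
    have ha' := Finset.mem_singleton.mp (hX₁ ha)
    have hb' := Finset.mem_singleton.mp (hX₂ hb)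
    subst ha'; exact Finset.disjoint_left.mp hd ha (hb' ▸ hb)

/-- The reconnected restriction `𝓗 ↾ X` of `𝓗` to `X`. -/
def reconRestrict (H : CLHypergraph α) (X : Finset α) : CLHypergraph α where
  verts := X ∩ H.verts
  edges := (H.sat.image (· ∩ X)).filter (·.Nonempty)
  edges_nonempty e he := (Finset.mem_filter.mp he).2
  edges_subset := by
    intro e he
    rcases Finset.mem_image.mp (Finset.mem_filter.mp he).1 with ⟨Z, hZ, rfl⟩
    have hZv : Z ⊆ H.verts := Finset.mem_powerset.mp (Finset.mem_filter.mp hZ).1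
    exact fun a ha => Finset.mem_inter.mpr
      ⟨(Finset.mem_inter.mp ha).2, hZv (Finset.mem_inter.mp ha).1⟩
  atomic := by
    intro v hv
    rcases Finset.mem_inter.mp hv with ⟨h1, h2⟩
    refine Finset.mem_filter.mpr ⟨Finset.mem_image.mpr ⟨{v}, ?_, ?_⟩, ?_⟩
    · exact Finset.mem_filter.mpr
        ⟨Finset.mem_powerset.mpr (Finset.singleton_subset_iff.mpr h2),
         H.singleton_connected h2⟩
    · exact Finset.inter_eq_left.mpr (Finset.singleton_subset_iff.mpr h1)
    · exact ⟨v, by simp [Finset.inter_eq_left.mpr (Finset.singleton_subset_iff.mpr h1)]⟩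

/-- `x ⇝ {y,z}` in `𝓗`: after removing `x`, the vertices `y` and `z` lie in the same
connected component.  Its negation is "`x` disconnects `y` and `z` in `𝓗`". -/
def Links (H : CLHypergraph α) (x y z : α) : Prop :=
  (H.restrict (H.verts \ {x})).SameComponent y z

/-- A hypergraph is contextual if for every connected subset `Y` of cardinality at least 3
and all distinct `x, y, z ∈ Y`, `x` disconnects `y` and `z` in `𝓗_Y` iff it does in `𝓗`. -/
def Contextual (H : CLHypergraph α) : Prop :=
  ∀ Y : Finset α, Y ⊆ H.verts → (H.restrict Y).Connected → 3 ≤ Y.card →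
    ∀ x y z : α, x ∈ Y → y ∈ Y → z ∈ Y → x ≠ y → y ≠ z → x ≠ z →
      ((H.restrict Y).Links x y z ↔ H.Links x y z)

end CLHypergraph

/-- Finite rooted trees with nodes decorated by finite sets (potential constructs). -/
inductive FTree (α : Type*) : Type _ where
  | node : Finset α → List (FTree α) → FTree α

namespace FTree

variable {α : Type*} [DecidableEq α]

/-- The decoration of the root node. -/
def label : FTree α → Finset α
  | node Y _ => Y

/-- The list of children of the root node. -/
def children : FTree α → List (FTree α)
  | node _ ts => ts

/-- The support of a tree: the union of the decorations of its nodes. -/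
def support : FTree α → Finset α
  | node Y [] => Y
  | node Y (t :: ts) => support t ∪ support (node Y ts)

/-- The list of decorations of the nodes of a tree. -/
def labels : FTree α → List (Finset α)
  | node Y [] => [Y]
  | node Y (t :: ts) => labels t ++ labels (node Y ts)

/-- The dimension of a construct: the sum over its nodes `X` of `|X| - 1`. -/
def dim (T : FTree α) : ℕ := (T.labels.map fun X => X.card - 1).sum

mutual
  /-- The (full) subtree rooted at the node decorated by `X`, if any. -/
  def subtreeAt : FTree α → Finset α → Option (FTree α)
    | node Y ts, X => if Y = X then some (node Y ts) else subtreeAtList ts X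
  def subtreeAtList : List (FTree α) → Finset α → Option (FTree α)
    | [], _ => none
    | t :: ts, X => (subtreeAt t X).elim (subtreeAtList ts X) some
end

/-- The support `supp (T ↾ X)` of the subtree rooted at the node decorated by `X`
(or `∅` if there is no such node). -/
def suppAt (T : FTree α) (X : Finset α) : Finset α :=
  ((T.subtreeAt X).map support).getD ∅

mutual
  /-- The list of supports of the subtrees rooted at the nodes of `T` (its nested set). -/
  def nests : FTree α → List (Finset α)
    | node Y ts => support (node Y ts) :: nestsList ts
  def nestsList : List (FTree α) → List (Finset α)
    | [] => []
    | t :: ts => nests t ++ nestsList ts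
end

/-- The nested set of a tree, as a finite set. -/
def nestSet (T : FTree α) : Finset (Finset α) := T.nests.toFinset

/-- `S ≺ T` (`S` is covered by `T`) in the face order: `T` is obtained from `S` by
contracting one edge between a node and its father (equivalently, the nested set of `T`
is obtained from that of `S` by removing one non-root element). -/
def CoveredBy (S T : FTree α) : Prop :=
  ∃ N ∈ S.nests, N ≠ S.support ∧ T.nestSet = S.nestSet.erase N

/-- The face (subface) order `S ≼ T` on constructs: the reflexive–transitive closure of
the covering relation `≺`. -/
def FaceLe (S T : FTree α) : Prop := Relation.ReflTransGen CoveredBy S T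

/-- `IsSubtree S T`: `S` is a (full) subtree of `T`. -/
inductive IsSubtree : FTree α → FTree α → Prop
  | refl (t : FTree α) : IsSubtree t t
  | child {s t u : FTree α} : IsSubtree s t → t ∈ u.children → IsSubtree s u

/-- In `T`, the node decorated by `X` has a child decorated by `Y`. -/
def ParentChild (X Y : Finset α) (T : FTree α) : Prop :=
  ∃ R : FTree α, IsSubtree R T ∧ R.label = X ∧ ∃ t ∈ R.children, t.label = Y

mutual
  /-- Pruning: remove all (subtrees rooted at) nodes whose decoration is not a subset
  of `X`, keeping the root. -/
  def prune (X : Finset α) : FTree α → FTree α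
    | node Y ts => node Y (pruneList X ts)
  def pruneList (X : Finset α) : List (FTree α) → List (FTree α)
    | [] => []
    | t :: ts => if t.label ⊆ X then prune X t :: pruneList X ts else pruneList X ts
end

end FTree

/-- `IsConstruct H T`: the tree `T` is a construct of the hypergraph `H`: its root `Y` is a
nonempty subset of the vertices, its children are constructs of the connected components of
`𝓗 ∖ Y` (one for each component, listed by increasing maximal vertex). -/
inductive IsConstruct {α : Type*} [LinearOrder α] : CLHypergraph α → FTree α → Prop
  | node {H : CLHypergraph α} (Y : Finset α) (ts : List (FTree α))
      (hY : Y.Nonempty) (hYsub : Y ⊆ H.verts)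
      (hmem : ∀ t ∈ ts, (H.restrict (H.verts \ Y)).IsComponent t.support)
      (hcover : ∀ C : Finset α, (H.restrict (H.verts \ Y)).IsComponent C →
        ∃ t ∈ ts, t.support = C)
      (hsorted : ts.Pairwise fun a b => a.support.max < b.support.max)
      (hchild : ∀ t ∈ ts, IsConstruct (H.restrict t.support) t) :
      IsConstruct H (FTree.node Y ts)

section ConstructionOrder

variable {α : Type*} [LinearOrder α]

/-- A construction: a construct all of whose nodes are singletons (a vertex of the
nestohedron). -/
def IsConstruction (H : CLHypergraph α) (T : FTree α) : Prop :=
  IsConstruct H T ∧ ∀ X ∈ T.labels, X.card = 1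

/-- An `X`-face: a 2-dimensional construct whose unique non-singleton node is decorated
by `X`, of cardinality 3. -/
def IsXFace (H : CLHypergraph α) (X : Finset α) (T : FTree α) : Prop :=
  IsConstruct H T ∧ X.card = 3 ∧ X ∈ T.labels ∧ ∀ Y ∈ T.labels, Y ≠ X → Y.card = 1

/-- Two distinct constructions are joined by an edge of the nestohedron: both are covered
by a common 1-dimensional construct. -/
def EdgeJoined (H : CLHypergraph α) (S T : FTree α) : Prop :=
  IsConstruction H S ∧ IsConstruction H T ∧ S ≠ T ∧
  ∃ V : FTree α, IsConstruct H V ∧ V.dim = 1 ∧ FTree.CoveredBy S V ∧ FTree.CoveredBy T V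

/-- The flip rewriting relation `S → T` on constructions of an ordered hypergraph:
`S` and `T` are the two endpoints of an edge whose 1-dimensional face has unique
non-singleton node `{x, y}` with `x < y`, and in `S` the node `{x}` is the parent of the
node `{y}`. -/
def Flip (H : CLHypergraph α) (S T : FTree α) : Prop :=
  IsConstruction H S ∧ IsConstruction H T ∧ S ≠ T ∧
  ∃ (V : FTree α) (x y : α), IsConstruct H V ∧ V.dim = 1 ∧ x ≠ y ∧
    ({x, y} : Finset α) ∈ V.labels ∧ FTree.CoveredBy S V ∧ FTree.CoveredBy T V ∧
    FTree.ParentChild ({x} : Finset α) ({y} : Finset α) S ∧ x < y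

/-- The coordinate vector of a construction `S` of `H`:
`v^S_x = |{e ∈ Sat(𝓗) : x ∈ e ⊆ supp (S ↾ x)}|`. -/
def coordVec (H : CLHypergraph α) (S : FTree α) (x : α) : ℕ :=
  (H.sat.filter fun e => x ∈ e ∧ e ⊆ S.suppAt {x}).card

end ConstructionOrder

/-- Raw terms over the signature `Σ_𝓗` (and `Σ^c_𝓗`): variables are (connected) subsets,
function symbols are pairs `(X, Y)` of subsets, applied to a list of arguments. -/
inductive HTerm (α : Type*) : Type _ where
  | var : Finset α → HTerm α
  | app : Finset α → Finset α → List (HTerm α) → HTerm α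

namespace HTerm

variable {α : Type*} [DecidableEq α]

/-- The (output) sort of a term. -/
def sortOf : HTerm α → Finset α
  | var A => A
  | app _ Y _ => Y

/-- The list of variables occurring in a term. -/
def varsList : HTerm α → List (Finset α)
  | var A => [A]
  | app _ _ [] => []
  | app X Y (t :: ts) => varsList t ++ varsList (app X Y ts)

/-- The list of first components of the function symbols occurring in a term. -/
def appFirsts : HTerm α → List (Finset α)
  | var _ => []
  | app X _ [] => [X]
  | app X Y (t :: ts) => appFirsts t ++ appFirsts (app X Y ts)

/-- A term is closed if it contains no variables. -/
def Closed (t : HTerm α) : Prop := t.varsList = []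

/-- The union `⋃ var(t)` of the variables of a term. -/
def varsUnion (t : HTerm α) : Finset α := t.varsList.foldr (· ∪ ·) ∅

mutual
  /-- Projection of a term to a decorated tree: every function symbol `(X, Y)` is sent to
  its first component `X`, and all variables are pruned. -/
  def toTree : HTerm α → FTree α
    | .var A => .node A []
    | .app X _ ts => .node X (toTreeList ts)
  def toTreeList : List (HTerm α) → List (FTree α)
    | [] => []
    | .var _ :: ts => toTreeList ts
    | t :: ts => toTree t :: toTreeList ts
end

end HTerm

/-- Well-formed terms over the signature `Σ_𝓗` associated with the hypergraph `H`:
a variable is a connected subset (its own sort); a function symbol `(X, Y)` (with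
`∅ ≠ X ⊆ Y ⊆ H` and `Y` connected) is applied to arguments whose sorts are exactly the
connected components of `𝓗_Y ∖ X`, listed by increasing maximal vertex. -/
inductive IsTerm {α : Type*} [LinearOrder α] (H : CLHypergraph α) : HTerm α → Prop
  | var (A : Finset α) : A ⊆ H.verts → (H.restrict A).Connected → IsTerm H (.var A)
  | app (X Y : Finset α) (ts : List (HTerm α)) :
      X.Nonempty → X ⊆ Y → Y ⊆ H.verts → (H.restrict Y).Connected →
      (∀ t ∈ ts, (H.restrict (Y \ X)).IsComponent t.sortOf) →
      (∀ C : Finset α, (H.restrict (Y \ X)).IsComponent C → ∃ t ∈ ts, t.sortOf = C) →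
      ts.Pairwise (fun a b => a.sortOf.max < b.sortOf.max) →
      (∀ t ∈ ts, IsTerm H t) →
      IsTerm H (.app X Y ts)


section Aux

namespace CLHypergraph

variable {α : Type*} [DecidableEq α]

lemma hyperext {G G' : CLHypergraph α} (h1 : G.verts = G'.verts) (h2 : G.edges = G'.edges) :
    G = G' := by
  cases G; cases G'; simp_all

lemma restrict_verts (G : CLHypergraph α) (A : Finset α) :
    (G.restrict A).verts = A ∩ G.verts := rfl

lemma restrict_edges (G : CLHypergraph α) (A : Finset α) :
    (G.restrict A).edges = G.edges.filter (· ⊆ A) := rfl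

lemma restrict_restrict (G : CLHypergraph α) {A B : Finset α} (h : B ⊆ A) :
    (G.restrict A).restrict B = G.restrict B := by
  apply hyperext
  · show B ∩ (A ∩ G.verts) = B ∩ G.verts
    ext a
    simp only [Finset.mem_inter]
    exact ⟨fun ⟨h1, _, h3⟩ => ⟨h1, h3⟩, fun ⟨h1, h3⟩ => ⟨h1, h h1, h3⟩⟩
  · show (G.edges.filter (· ⊆ A)).filter (· ⊆ B) = G.edges.filter (· ⊆ B)
    ext e
    simp only [Finset.mem_filter]
    exact ⟨fun ⟨⟨h1, _⟩, h3⟩ => ⟨h1, h3⟩, fun ⟨h1, h3⟩ => ⟨⟨h1, h3.trans h⟩, h3⟩⟩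

lemma edge_connected (G : CLHypergraph α) {e : Finset α} (he : e ∈ G.edges) :
    (G.restrict e).Connected := by
  have hsub : e ⊆ G.verts := G.edges_subset e he
  have hverts : e ∩ G.verts = e := Finset.inter_eq_left.mpr hsub
  constructor
  · show (e ∩ G.verts).Nonempty
    rw [hverts]; exact G.edges_nonempty e he
  · intro X₁ X₂ h1 h2 hd hu
    have hu' : X₁ ∪ X₂ = e := by
      rw [show ((G.restrict e).verts = e ∩ G.verts) from rfl] at hu
      rw [hu, hverts]
    refine ⟨e, Finset.mem_filter.mpr ⟨he, le_refl e⟩, ?_, ?_⟩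
    · intro hX
      obtain ⟨b, hb⟩ := h2
      have : b ∈ X₁ := hX (hu' ▸ Finset.mem_union_right X₁ hb)
      exact Finset.disjoint_left.mp hd this hb
    · intro hX
      obtain ⟨b, hb⟩ := h1
      have : b ∈ X₂ := hX (hu' ▸ Finset.mem_union_left X₂ hb)
      exact Finset.disjoint_left.mp hd hb this

lemma mem_sat_iff (G : CLHypergraph α) {Z : Finset α} :
    Z ∈ G.sat ↔ Z ⊆ G.verts ∧ (G.restrict Z).Connected := by
  unfold sat
  simp [Finset.mem_filter, Finset.mem_powerset]

/-- A connected subhypergraph: given a disjoint cover of a connected subset, there is an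
edge inside it crossing the cover, unless the subset is inside one part. -/
lemma connected_part (G : CLHypergraph α) {A X₁ X₂ : Finset α}
    (hc : (G.restrict A).Connected) (hd : Disjoint X₁ X₂) (hsub : A ∩ G.verts ⊆ X₁ ∪ X₂) :
    A ∩ G.verts ⊆ X₁ ∨ A ∩ G.verts ⊆ X₂ ∨
      ∃ e ∈ G.edges, e ⊆ A ∧ ¬e ⊆ X₁ ∧ ¬e ⊆ X₂ := by
  set A' := A ∩ G.verts with hA'
  by_cases h1 : A' ⊆ X₁
  · exact Or.inl h1
  by_cases h2 : A' ⊆ X₂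
  · exact Or.inr (Or.inl h2)
  refine Or.inr (Or.inr ?_)
  have hn1 : (A' ∩ X₁).Nonempty := by
    obtain ⟨a, haA, haX⟩ := Finset.not_subset.mp h2
    exact ⟨a, Finset.mem_inter.mpr ⟨haA, (Finset.mem_union.mp (hsub haA)).resolve_right haX⟩⟩
  have hn2 : (A' ∩ X₂).Nonempty := by
    obtain ⟨a, haA, haX⟩ := Finset.not_subset.mp h1
    exact ⟨a, Finset.mem_inter.mpr ⟨haA, (Finset.mem_union.mp (hsub haA)).resolve_left haX⟩⟩
  have hdd : Disjoint (A' ∩ X₁) (A' ∩ X₂) :=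
    (hd.mono Finset.inter_subset_right Finset.inter_subset_right)
  have huu : (A' ∩ X₁) ∪ (A' ∩ X₂) = (G.restrict A).verts := by
    rw [restrict_verts, ← hA', ← Finset.inter_union_distrib_left]
    exact Finset.inter_eq_left.mpr hsub
  obtain ⟨e, hee, he1, he2⟩ := hc.2 _ _ hn1 hn2 hdd huu
  obtain ⟨heG, heA⟩ := Finset.mem_filter.mp hee
  refine ⟨e, heG, heA, fun h => he1 ?_, fun h => he2 ?_⟩
  · exact fun a ha => Finset.mem_inter.mpr
      ⟨Finset.mem_inter.mpr ⟨heA ha, G.edges_subset e heG ha⟩, h ha⟩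
  · exact fun a ha => Finset.mem_inter.mpr
      ⟨Finset.mem_inter.mpr ⟨heA ha, G.edges_subset e heG ha⟩, h ha⟩

lemma union_connected (G : CLHypergraph α) {A B : Finset α} (hA : A ⊆ G.verts)
    (hB : B ⊆ G.verts) (hcA : (G.restrict A).Connected) (hcB : (G.restrict B).Connected)
    (hAB : (A ∩ B).Nonempty) : (G.restrict (A ∪ B)).Connected := by
  have hAv : A ∩ G.verts = A := Finset.inter_eq_left.mpr hA
  have hBv : B ∩ G.verts = B := Finset.inter_eq_left.mpr hB
  have hABv : (A ∪ B) ∩ G.verts = A ∪ B := Finset.inter_eq_left.mpr (Finset.union_subset hA hB)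
  constructor
  · rw [restrict_verts, hABv]
    obtain ⟨a, ha⟩ := hAB
    exact ⟨a, Finset.mem_union_left B (Finset.mem_inter.mp ha).1⟩
  · intro X₁ X₂ h1 h2 hd hu
    rw [restrict_verts, hABv] at hu
    have hsubA : A ∩ G.verts ⊆ X₁ ∪ X₂ := by
      rw [hAv, hu]; exact Finset.subset_union_left
    have hsubB : B ∩ G.verts ⊆ X₁ ∪ X₂ := by
      rw [hBv, hu]; exact Finset.subset_union_right
    obtain ⟨v, hv⟩ := hAB
    obtain ⟨hvA, hvB⟩ := Finset.mem_inter.mp hv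
    rcases G.connected_part hcA hd hsubA with hA1 | hA2 | ⟨e, heG, heA, he1, he2⟩
    · rcases G.connected_part hcB hd hsubB with hB1 | hB2 | ⟨e, heG, heB, he1, he2⟩
      · exfalso
        obtain ⟨b, hb⟩ := h2
        rcases Finset.mem_union.mp (hu ▸ Finset.mem_union_right X₁ hb : b ∈ A ∪ B) with h | h
        · exact Finset.disjoint_left.mp hd (hA1 (by rw [hAv]; exact h)) hb
        · exact Finset.disjoint_left.mp hd (hB1 (by rw [hBv]; exact h)) hb
      · exfalso
        have hv1 : v ∈ X₁ := hA1 (by rw [hAv]; exact hvA)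
        have hv2 : v ∈ X₂ := hB2 (by rw [hBv]; exact hvB)
        exact Finset.disjoint_left.mp hd hv1 hv2
      · exact ⟨e, Finset.mem_filter.mpr ⟨heG, heB.trans Finset.subset_union_right⟩, he1, he2⟩
    · rcases G.connected_part hcB hd hsubB with hB1 | hB2 | ⟨e, heG, heB, he1, he2⟩
      · exfalso
        have hv1 : v ∈ X₁ := hB1 (by rw [hBv]; exact hvB)
        have hv2 : v ∈ X₂ := hA2 (by rw [hAv]; exact hvA)
        exact Finset.disjoint_left.mp hd hv1 hv2
      · exfalso
        obtain ⟨b, hb⟩ := h1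
        rcases Finset.mem_union.mp (hu ▸ Finset.mem_union_left X₂ hb : b ∈ A ∪ B) with h | h
        · exact Finset.disjoint_left.mp hd hb (hA2 (by rw [hAv]; exact h))
        · exact Finset.disjoint_left.mp hd hb (hB2 (by rw [hBv]; exact h))
      · exact ⟨e, Finset.mem_filter.mpr ⟨heG, heB.trans Finset.subset_union_right⟩, he1, he2⟩
    · exact ⟨e, Finset.mem_filter.mpr ⟨heG, heA.trans Finset.subset_union_left⟩, he1, he2⟩

lemma exists_component (G : CLHypergraph α) {Y : Finset α} (hY : Y ⊆ G.verts)
    (hc : (G.restrict Y).Connected) : ∃ C, G.IsComponent C ∧ Y ⊆ C := by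
  classical
  set S := G.verts.powerset.filter fun Z => Y ⊆ Z ∧ (G.restrict Z).Connected with hS
  have hYS : Y ∈ S := Finset.mem_filter.mpr ⟨Finset.mem_powerset.mpr hY, le_refl Y, hc⟩
  obtain ⟨C, hCS, hmax⟩ := S.exists_max_image Finset.card ⟨Y, hYS⟩
  obtain ⟨hCp, hYC, hCc⟩ := Finset.mem_filter.mp hCS
  refine ⟨C, ⟨Finset.mem_powerset.mp hCp, hCc, ?_⟩, hYC⟩
  intro D hCD hDv hDc
  have hDS : D ∈ S := Finset.mem_filter.mpr ⟨Finset.mem_powerset.mpr hDv, hYC.trans hCD, hDc⟩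
  exact (Finset.eq_of_subset_of_card_le hCD (hmax D hDS)).symm

lemma component_nonempty (G : CLHypergraph α) {C : Finset α} (h : G.IsComponent C) :
    C.Nonempty := by
  obtain ⟨a, ha⟩ := h.2.1.1
  exact ⟨a, (Finset.mem_inter.mp ha).1⟩

lemma component_eq_of_inter (G : CLHypergraph α) {C C' : Finset α} (h : G.IsComponent C)
    (h' : G.IsComponent C') (hne : (C ∩ C').Nonempty) : C = C' := by
  have hu : (G.restrict (C ∪ C')).Connected := G.union_connected h.1 h'.1 h.2.1 h'.2.1 hne
  have h1 : C ∪ C' = C :=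
    h.2.2 _ Finset.subset_union_left (Finset.union_subset h.1 h'.1) hu
  have h2 : C ∪ C' = C' :=
    h'.2.2 _ Finset.subset_union_right (Finset.union_subset h.1 h'.1) hu
  rw [← h1, h2]

/-- The relation used to transfer constructs: same vertices, more edges, all of them
connected in the smaller hypergraph. -/
def Rel (G G' : CLHypergraph α) : Prop :=
  G.verts = G'.verts ∧ (∀ e ∈ G.edges, e ∈ G'.edges) ∧
    ∀ e ∈ G'.edges, e ⊆ G.verts ∧ (G.restrict e).Connected

lemma rel_restrict {G G' : CLHypergraph α} (h : Rel G G') (Y : Finset α) :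
    Rel (G.restrict Y) (G'.restrict Y) := by
  obtain ⟨hv, he, hc⟩ := h
  refine ⟨by rw [restrict_verts, restrict_verts, hv], ?_, ?_⟩
  · intro e hee
    obtain ⟨h1, h2⟩ := Finset.mem_filter.mp hee
    exact Finset.mem_filter.mpr ⟨he e h1, h2⟩
  · intro e hee
    obtain ⟨h1, h2⟩ := Finset.mem_filter.mp hee
    obtain ⟨h3, h4⟩ := hc e h1
    refine ⟨fun a ha => Finset.mem_inter.mpr ⟨h2 ha, h3 ha⟩, ?_⟩
    rw [G.restrict_restrict h2]
    exact h4

lemma rel_connected {G G' : CLHypergraph α} (h : Rel G G') :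
    G.Connected ↔ G'.Connected := by
  obtain ⟨hv, he, hc⟩ := h
  constructor
  · rintro ⟨h1, h2⟩
    refine ⟨hv ▸ h1, ?_⟩
    intro X₁ X₂ hn1 hn2 hd hu
    obtain ⟨e, hee, hx⟩ := h2 X₁ X₂ hn1 hn2 hd (hu.trans hv.symm)
    exact ⟨e, he e hee, hx⟩
  · rintro ⟨h1, h2⟩
    refine ⟨hv ▸ h1, ?_⟩
    intro X₁ X₂ hn1 hn2 hd hu
    obtain ⟨e, hee, he1, he2⟩ := h2 X₁ X₂ hn1 hn2 hd (hu.trans hv)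
    obtain ⟨hesub, hecon⟩ := hc e hee
    have hsub : e ∩ G.verts ⊆ X₁ ∪ X₂ := by
      rw [hu]; exact Finset.inter_subset_right
    rcases G.connected_part hecon hd hsub with h | h | ⟨f, hfG, hfe, hf1, hf2⟩
    · exact absurd (fun a ha => h (Finset.mem_inter.mpr ⟨ha, hesub ha⟩)) he1
    · exact absurd (fun a ha => h (Finset.mem_inter.mpr ⟨ha, hesub ha⟩)) he2
    · exact ⟨f, hfG, hf1, hf2⟩

lemma rel_component {G G' : CLHypergraph α} (h : Rel G G') {C : Finset α} :
    G.IsComponent C ↔ G'.IsComponent C := by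
  have hv := h.1
  constructor
  · rintro ⟨h1, h2, h3⟩
    refine ⟨hv ▸ h1, (rel_connected (rel_restrict h C)).mp h2, ?_⟩
    intro D hCD hDv hDc
    exact h3 D hCD (hv ▸ hDv) ((rel_connected (rel_restrict h D)).mpr hDc)
  · rintro ⟨h1, h2, h3⟩
    refine ⟨hv ▸ h1, (rel_connected (rel_restrict h C)).mpr h2, ?_⟩
    intro D hCD hDv hDc
    exact h3 D hCD (hv ▸ hDv) ((rel_connected (rel_restrict h D)).mp hDc)

end CLHypergraph

lemma rel_construct {α : Type*} [LinearOrder α] {G : CLHypergraph α} {T : FTree α}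
    (hT : IsConstruct G T) :
    ∀ G', CLHypergraph.Rel G G' → IsConstruct G' T := by
  induction hT with
  | @node H Y ts hY hYsub hmem hcover hsorted hchild ih =>
    intro G' hrel
    have hv := hrel.1
    have hrel' : CLHypergraph.Rel (H.restrict (H.verts \ Y)) (G'.restrict (G'.verts \ Y)) := by
      rw [← hv]
      exact CLHypergraph.rel_restrict hrel _
    refine IsConstruct.node Y ts hY (hv ▸ hYsub) ?_ ?_ hsorted ?_
    · intro t ht
      exact (CLHypergraph.rel_component hrel').mp (hmem t ht)
    · intro C hC
      exact hcover C ((CLHypergraph.rel_component hrel').mpr hC)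
    · intro t ht
      exact ih t ht _ (CLHypergraph.rel_restrict hrel t.support)

end Aux

/-- Lemma `partial-construct`.  If `𝓗, X ⇝ H₁, …, Hₙ` and constructs
`Tᵢ` of `𝓗_{Hᵢ}` are given for `i ∈ I ⊆ {1, …, n}`, then `X({Tᵢ : i ∈ I})` is a construct
of `𝓗 ↾ (H ∖ ⋃_{j ∉ I} Hⱼ)`. -/
theorem stmt1 {α : Type*} [LinearOrder α] (H : CLHypergraph α) (hH : H.Connected)
    (X : Finset α) (hX : X.Nonempty) (hXsub : X ⊆ H.verts)
    (ts : List (FTree α))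
    (hmem : ∀ t ∈ ts, (H.restrict (H.verts \ X)).IsComponent t.support)
    (hchild : ∀ t ∈ ts, IsConstruct (H.restrict t.support) t)
    (hsorted : ts.Pairwise fun a b => a.support.max < b.support.max) :
    IsConstruct
      (H.reconRestrict (H.verts \
        ((H.verts.powerset.filter fun C =>
          (H.restrict (H.verts \ X)).IsComponent C ∧ C ∉ ts.map FTree.support).sup id)))
      (FTree.node X ts) := by
  classical
  set D := (H.verts.powerset.filter fun C =>
      (H.restrict (H.verts \ X)).IsComponent C ∧ C ∉ ts.map FTree.support).sup id with hDdef
  set G' := H.reconRestrict (H.verts \ D) with hG'def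
  -- basic facts about components of H.restrict (H.verts \ X)
  have hcomp_sub : ∀ C : Finset α, (H.restrict (H.verts \ X)).IsComponent C →
      C ⊆ H.verts \ X := fun C hC => hC.1.trans Finset.inter_subset_left
  have hDsub : D ⊆ H.verts \ X := by
    rw [hDdef]
    intro a ha
    obtain ⟨C, hC, haC⟩ := Finset.mem_sup.mp ha
    exact hcomp_sub C (Finset.mem_filter.mp hC).2.1 haC
  have hXD : Disjoint X D := by
    refine Finset.disjoint_left.mpr fun a haX haD => ?_
    exact (Finset.mem_sdiff.mp (hDsub haD)).2 haX
  have hSdisjD : ∀ t ∈ ts, Disjoint t.support D := by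
    intro t ht
    refine Finset.disjoint_left.mpr fun a haS haD => ?_
    rw [hDdef] at haD
    obtain ⟨C, hC, haC⟩ := Finset.mem_sup.mp haD
    obtain ⟨_, hCcomp, hCnot⟩ := Finset.mem_filter.mp hC
    have : t.support = C :=
      CLHypergraph.component_eq_of_inter _ (hmem t ht) hCcomp ⟨a, Finset.mem_inter.mpr ⟨haS, haC⟩⟩
    exact hCnot (this ▸ List.mem_map.mpr ⟨t, ht, rfl⟩)
  have hG'verts : G'.verts = H.verts \ D :=
    Finset.inter_eq_left.mpr (Finset.sdiff_subset)
  -- the key Rel lemma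
  have key : ∀ B : Finset α, B ⊆ H.verts → Disjoint B X → Disjoint B D →
      (∀ C : Finset α, (H.restrict (H.verts \ X)).IsComponent C → (C ∩ B).Nonempty → C ⊆ B) →
      CLHypergraph.Rel (H.restrict B) (G'.restrict B) := by
    intro B hBv hBX hBD hclosed
    refine ⟨?_, ?_, ?_⟩
    · show B ∩ H.verts = B ∩ G'.verts
      rw [hG'verts]
      ext a
      simp only [Finset.mem_inter, Finset.mem_sdiff]
      exact ⟨fun ⟨h1, h2⟩ => ⟨h1, h2, fun hD => Finset.disjoint_left.mp hBD h1 hD⟩,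
        fun ⟨h1, h2, _⟩ => ⟨h1, h2⟩⟩
    · intro e he
      obtain ⟨heH, heB⟩ := Finset.mem_filter.mp he
      refine Finset.mem_filter.mpr ⟨?_, heB⟩
      show e ∈ G'.edges
      have hint : e ∩ (H.verts \ D) = e := by
        refine Finset.inter_eq_left.mpr fun a ha => Finset.mem_sdiff.mpr
          ⟨H.edges_subset e heH ha, fun hD => Finset.disjoint_left.mp hBD (heB ha) hD⟩
      refine Finset.mem_filter.mpr ⟨Finset.mem_image.mpr ⟨e, ?_, hint⟩, ?_⟩
      · exact (H.mem_sat_iff).mpr ⟨H.edges_subset e heH, H.edge_connected heH⟩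
      · exact H.edges_nonempty e heH
    · intro e he
      obtain ⟨he', heB⟩ := Finset.mem_filter.mp he
      obtain ⟨himg, hne⟩ := Finset.mem_filter.mp he'
      obtain ⟨Z, hZ, hZe⟩ := Finset.mem_image.mp himg
      obtain ⟨hZv, hZc⟩ := (H.mem_sat_iff).mp hZ
      subst hZe
      -- Z avoids X
      have hZX : Z ⊆ H.verts \ X := by
        intro a ha
        refine Finset.mem_sdiff.mpr ⟨hZv ha, fun haX => ?_⟩
        have haD : a ∉ D := fun h => Finset.disjoint_left.mp hXD haX h
        have haB : a ∈ B := heB (Finset.mem_inter.mpr ⟨ha, Finset.mem_sdiff.mpr ⟨hZv ha, haD⟩⟩)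
        exact Finset.disjoint_left.mp hBX haB haX
      have hZc' : ((H.restrict (H.verts \ X)).restrict Z).Connected := by
        rw [H.restrict_restrict hZX]; exact hZc
      have hZv' : Z ⊆ (H.restrict (H.verts \ X)).verts :=
        fun a ha => Finset.mem_inter.mpr ⟨hZX ha, hZv ha⟩
      obtain ⟨C, hC, hZC⟩ := CLHypergraph.exists_component _ hZv' hZc'
      obtain ⟨a, ha⟩ := hne
      obtain ⟨haZ, _⟩ := Finset.mem_inter.mp ha
      have hCB : C ⊆ B := hclosed C hC ⟨a, Finset.mem_inter.mpr ⟨hZC haZ, heB ha⟩⟩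
      have hZB : Z ⊆ B := hZC.trans hCB
      have hZD : Z ∩ (H.verts \ D) = Z := by
        refine Finset.inter_eq_left.mpr fun b hb => Finset.mem_sdiff.mpr
          ⟨hZv hb, fun hD => Finset.disjoint_left.mp hBD (hZB hb) hD⟩
      rw [hZD]
      refine ⟨fun b hb => Finset.mem_inter.mpr ⟨hZB hb, hZv hb⟩, ?_⟩
      rw [H.restrict_restrict hZB]
      exact hZc
  -- W : vertex set after removing X from G'
  have hWeq : G'.verts \ X = (H.verts \ X) \ D := by
    rw [hG'verts]
    ext a
    simp only [Finset.mem_sdiff]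
    tauto
  -- closedness of W
  have hWclosed : ∀ C : Finset α, (H.restrict (H.verts \ X)).IsComponent C →
      (C ∩ (G'.verts \ X)).Nonempty → C ⊆ G'.verts \ X := by
    intro C hC hne
    by_cases hkept : C ∈ ts.map FTree.support
    · obtain ⟨t, ht, hts⟩ := List.mem_map.mp hkept
      rw [hWeq, ← hts]
      intro a ha
      exact Finset.mem_sdiff.mpr ⟨hcomp_sub C hC (hts ▸ ha),
        fun hD => Finset.disjoint_left.mp (hSdisjD t ht) ha hD⟩
    · exfalso
      have hCD : C ⊆ D := by
        rw [hDdef]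
        exact Finset.le_sup (f := id) (Finset.mem_filter.mpr
          ⟨Finset.mem_powerset.mpr (hC.1.trans (Finset.inter_subset_left.trans Finset.sdiff_subset)), hC, hkept⟩)
      obtain ⟨a, ha⟩ := hne
      obtain ⟨haC, haW⟩ := Finset.mem_inter.mp ha
      rw [hWeq] at haW
      exact (Finset.mem_sdiff.mp haW).2 (hCD haC)
  have hrelW : CLHypergraph.Rel (H.restrict (G'.verts \ X)) (G'.restrict (G'.verts \ X)) := by
    refine key _ ?_ ?_ ?_ hWclosed
    · rw [hWeq]; exact Finset.sdiff_subset.trans Finset.sdiff_subset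
    · rw [hWeq]
      exact Finset.disjoint_left.mpr fun a ha =>
        fun haX => (Finset.mem_sdiff.mp (Finset.mem_sdiff.mp ha).1).2 haX
    · rw [hWeq]; exact Finset.sdiff_disjoint
  -- supports are components of H.restrict W
  have hScomp : ∀ t ∈ ts, (H.restrict (G'.verts \ X)).IsComponent t.support := by
    intro t ht
    have hS := hmem t ht
    have hSsub : t.support ⊆ H.verts \ X := hcomp_sub _ hS
    have hSW : t.support ⊆ G'.verts \ X := by
      rw [hWeq]
      intro a ha
      exact Finset.mem_sdiff.mpr ⟨hSsub ha, fun hD => Finset.disjoint_left.mp (hSdisjD t ht) ha hD⟩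
    have hScon : (H.restrict t.support).Connected := by
      have := hS.2.1
      rwa [H.restrict_restrict hSsub] at this
    refine ⟨fun a ha => Finset.mem_inter.mpr ⟨hSW ha, (Finset.mem_sdiff.mp (hSsub ha)).1⟩, ?_, ?_⟩
    · rw [H.restrict_restrict hSW]; exact hScon
    · intro E hSE hEv hEc
      have hEW : E ⊆ G'.verts \ X := hEv.trans Finset.inter_subset_left
      have hEX : E ⊆ H.verts \ X := by
        rw [hWeq] at hEW; exact hEW.trans Finset.sdiff_subset
      rw [H.restrict_restrict hEW] at hEc
      refine hS.2.2 E hSE ?_ ?_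
      · exact fun a ha => Finset.mem_inter.mpr ⟨hEX ha, (Finset.mem_sdiff.mp (hEX ha)).1⟩
      · rw [H.restrict_restrict hEX]; exact hEc
  refine IsConstruct.node X ts hX ?_ ?_ ?_ hsorted ?_
  · rw [hG'verts]
    exact fun a ha => Finset.mem_sdiff.mpr ⟨hXsub ha, fun hD => Finset.disjoint_left.mp hXD ha hD⟩
  · intro t ht
    exact (CLHypergraph.rel_component hrelW).mp (hScomp t ht)
  · intro C hC
    have hC' : (H.restrict (G'.verts \ X)).IsComponent C :=
      (CLHypergraph.rel_component hrelW).mpr hC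
    obtain ⟨v, hv⟩ := CLHypergraph.component_nonempty _ hC'
    have hvW : v ∈ G'.verts \ X := (hC'.1.trans Finset.inter_subset_left) hv
    have hvX : v ∈ (H.restrict (H.verts \ X)).verts := by
      rw [hWeq] at hvW
      have := (Finset.mem_sdiff.mp hvW).1
      exact Finset.mem_inter.mpr ⟨this, (Finset.mem_sdiff.mp this).1⟩
    obtain ⟨C₀, hC₀, hvC₀⟩ := CLHypergraph.exists_component _
      (Finset.singleton_subset_iff.mpr hvX) (CLHypergraph.singleton_connected _ hvX)
    have hkept : C₀ ∈ ts.map FTree.support := by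
      by_contra hnot
      have hC₀D : C₀ ⊆ D := by
        rw [hDdef]
        exact Finset.le_sup (f := id) (Finset.mem_filter.mpr
          ⟨Finset.mem_powerset.mpr (hC₀.1.trans (Finset.inter_subset_left.trans Finset.sdiff_subset)), hC₀, hnot⟩)
      have hvD : v ∈ D := hC₀D (hvC₀ (Finset.mem_singleton_self v))
      rw [hWeq] at hvW
      exact (Finset.mem_sdiff.mp hvW).2 hvD
    obtain ⟨t, ht, hts⟩ := List.mem_map.mp hkept
    refine ⟨t, ht, ?_⟩
    refine CLHypergraph.component_eq_of_inter _ (hScomp t ht) hC' ?_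
    exact ⟨v, Finset.mem_inter.mpr ⟨hts ▸ hvC₀ (Finset.mem_singleton_self v), hv⟩⟩
  · intro t ht
    have hSsub : t.support ⊆ H.verts \ X := hcomp_sub _ (hmem t ht)
    refine rel_construct (hchild t ht) _ (key t.support ?_ ?_ (hSdisjD t ht) ?_)
    · exact hSsub.trans Finset.sdiff_subset
    · exact Finset.disjoint_left.mpr fun a ha haX => (Finset.mem_sdiff.mp (hSsub ha)).2 haX
    · intro C hC hne
      have := CLHypergraph.component_eq_of_inter _ hC (hmem t ht) hne
      rw [this]

end
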